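/- arXiv:1509.08875 — 4 statements merged into one kernel-verified Lean document; each statement's English description precedes it below -/
import Mathlib

section
/- For p ∈ (0,1/2], q = 1-p, and R(z) = z(z²-3z+(2+pq))/(pq), the preimage of the interval [0,2] under R restricted to ℝ equals [0,p] ∪ [q,1+p] ∪ [1+q,2]. -/
theorem preimage_of_Icc (p q : ℝ) (hp : 0 < p) (hp2 : p ≤ 1 / 2) (hq : q = 1 - p)
    (R : ℝ → ℝ) (hR : ∀ z, R z = z * (z ^ 2 - 3 * z + (2 + p * q)) / (p * q)) :
    R ⁻¹' (Set.Icc 0 2) =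
      Set.Icc 0 p ∪ Set.Icc q (1 + p) ∪ Set.Icc (1 + q) 2 := by
  subst hq
  have hq0 : (0:ℝ) < 1 - p := by linarith
  have hpq : (0:ℝ) < p * (1 - p) := mul_pos hp hq0
  ext z
  simp only [Set.mem_preimage, Set.mem_Icc, Set.mem_union, hR,
    le_div_iff₀ hpq, div_le_iff₀ hpq, zero_mul]
  constructor
  · rintro ⟨h1, h2⟩
    rcases le_or_gt z p with hzp | hzp
    · left; left
      refine ⟨?_, hzp⟩
      by_contra h
      push_neg at h
      nlinarith [mul_pos (mul_pos (by linarith : (0:ℝ) < -z)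
        (by linarith : (0:ℝ) < 1 + p - z)) (by linarith : (0:ℝ) < 2 - p - z)]
    · rcases le_or_gt z (1 + p) with hz1 | hz1
      · left; right
        refine ⟨?_, hz1⟩
        by_contra h
        push_neg at h
        nlinarith [mul_pos (mul_pos (by linarith : (0:ℝ) < z - p)
          (by linarith : (0:ℝ) < 1 - p - z)) (by linarith : (0:ℝ) < 2 - z)]
      · right
        rcases le_or_gt z 2 with hz2 | hz2
        · refine ⟨?_, hz2⟩
          by_contra h
          push_neg at h
          nlinarith [mul_pos (mul_pos (by linarith : (0:ℝ) < z)
            (by linarith : (0:ℝ) < z - (1 + p))) (by linarith : (0:ℝ) < 2 - p - z)]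
        · exfalso
          nlinarith [mul_pos (mul_pos (by linarith : (0:ℝ) < z - 2)
            (by linarith : (0:ℝ) < z - p)) (by linarith : (0:ℝ) < z - (1 - p))]
  · rintro ((⟨h0, h1⟩ | ⟨h0, h1⟩) | ⟨h0, h1⟩)
    · constructor
      · nlinarith [mul_nonneg (mul_nonneg h0 (by linarith : (0:ℝ) ≤ 1 + p - z))
          (by linarith : (0:ℝ) ≤ 2 - p - z)]
      · nlinarith [mul_nonneg (mul_nonneg (by linarith : (0:ℝ) ≤ 2 - z)
          (by linarith : (0:ℝ) ≤ p - z)) (by linarith : (0:ℝ) ≤ 1 - p - z)]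
    · constructor
      · nlinarith [mul_nonneg (mul_nonneg (by linarith : (0:ℝ) ≤ z)
          (by linarith : (0:ℝ) ≤ 1 + p - z)) (by linarith : (0:ℝ) ≤ 2 - p - z)]
      · nlinarith [mul_nonneg (mul_nonneg (by linarith : (0:ℝ) ≤ z - p)
          (by linarith : (0:ℝ) ≤ z - (1 - p))) (by linarith : (0:ℝ) ≤ 2 - z)]
    · constructor
      · nlinarith [mul_nonneg (mul_nonneg (by linarith : (0:ℝ) ≤ z)
          (by linarith : (0:ℝ) ≤ z - (1 + p))) (by linarith : (0:ℝ) ≤ z - (2 - p))]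
      · nlinarith [mul_nonneg (mul_nonneg (by linarith : (0:ℝ) ≤ z - p)
          (by linarith : (0:ℝ) ≤ z - (1 - p))) (by linarith : (0:ℝ) ≤ 2 - z)]
end

section
/- For p ∈ (0,1/2] and q = 1-p, R maps the interval [0,p] bijectively and increasingly onto [0,2], where R(z) = z(z²-3z+(2+pq))/(pq). -/
theorem R_bij_on_first_interval (p q : ℝ) (hp : 0 < p) (hp2 : p ≤ 1 / 2) (hq : q = 1 - p)
    (R : ℝ → ℝ) (hR : ∀ z, R z = z * (z ^ 2 - 3 * z + (2 + p * q)) / (p * q)) :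
    StrictMonoOn R (Set.Icc 0 p) ∧ Set.BijOn R (Set.Icc 0 p) (Set.Icc 0 2) := by
  subst hq
  have hq0 : (0:ℝ) < 1 - p := by linarith
  have hpq : 0 < p * (1 - p) := mul_pos hp hq0
  have hmono : StrictMonoOn R (Set.Icc 0 p) := by
    intro a ha b hb hab
    rw [hR, hR, div_lt_div_iff_of_pos_right hpq]
    have ha0 : 0 ≤ a := ha.1
    have hbp : b ≤ p := hb.2
    nlinarith [mul_pos (sub_pos.2 hab) (mul_pos hp hq0), sq_nonneg (a - b),
      sq_nonneg (a + b), mul_nonneg ha0 hb.1,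
      mul_nonneg (sub_nonneg.2 hbp) (sub_nonneg.2 hbp),
      mul_pos (sub_pos.2 (lt_of_lt_of_le hab hbp)) (sub_pos.2 hab),
      mul_nonneg (mul_nonneg (sub_nonneg.2 hbp) ha0) (sub_nonneg.2 (le_of_lt hab))]
  have hR0 : R 0 = 0 := by rw [hR]; ring
  have hRp : R p = 2 := by
    rw [hR]; field_simp; ring
  refine ⟨hmono, ?_, hmono.injOn, ?_⟩
  · intro x hx
    constructor
    · rw [← hR0]
      exact hmono.monotoneOn ⟨le_refl 0, le_of_lt hp⟩ hx hx.1
    · rw [← hRp]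
      exact hmono.monotoneOn hx ⟨le_of_lt hp, le_refl p⟩ hx.2
  · have hcont : ContinuousOn R (Set.Icc 0 p) := by
      have : R = fun z => z * (z ^ 2 - 3 * z + (2 + p * (1 - p))) / (p * (1 - p)) :=
        funext hR
      rw [this]
      fun_prop
    have := intermediate_value_Icc (le_of_lt hp) hcont
    rw [hR0, hRp] at this
    exact this
end

section
/- Let π : ℤ₊ → (0,∞) be the invariant measure of the pq birth-and-death chain generated by Δ_p, determined by the reversibility relations π(0)·1 = π(1)·q and, for x ≥ 1, π(x)·p(x,x+1) = π(x+1)·p(x+1,x) with transition probabilities p(x,x+1) = p, p(x,x-1) = q if x·3^{-m(x)} ≡ 1 mod 3 and p(x,x+1) = q, p(x,x-1) = p if x·3^{-m(x)} ≡ 2 mod 3 (and p(0,1)=1). Then π(3x) = π(x) for all x ∈ ℤ₊ with x ≥ 1. -/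
/-- Probability of moving up (`x → x+1`) in the `pq` random walk. -/
def pqUp (p q : ℝ) : ℕ → ℝ
  | 0 => 1
  | (x + 1) =>
      if (x + 1) / 3 ^ (padicValNat 3 (x + 1)) % 3 = 1 then p else q

/-- Probability of moving down (`x → x-1`) in the `pq` random walk (for `x ≥ 1`). -/
def pqDown (p q : ℝ) : ℕ → ℝ
  | 0 => 0
  | (x + 1) =>
      if (x + 1) / 3 ^ (padicValNat 3 (x + 1)) % 3 = 1 then q else p

/-- The invariant (symmetrizing) measure of the `pq` birth-and-death chain,
normalized by `π(0) = 1`, defined via the reversibility relations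
`π(x) p(x,x+1) = π(x+1) p(x+1,x)`. -/
noncomputable def pqPi (p q : ℝ) : ℕ → ℝ
  | 0 => 1
  | (x + 1) => pqPi p q x * pqUp p q x / pqDown p q (x + 1)

lemma pqUp_eq (p q : ℝ) (n : ℕ) (hn : 1 ≤ n) :
    pqUp p q n = if n / 3 ^ (padicValNat 3 n) % 3 = 1 then p else q := by
  cases n with
  | zero => omega
  | succ m => rfl

lemma pqDown_eq (p q : ℝ) (n : ℕ) (hn : 1 ≤ n) :
    pqDown p q n = if n / 3 ^ (padicValNat 3 n) % 3 = 1 then q else p := by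
  cases n with
  | zero => omega
  | succ m => rfl

lemma pqPi_succ (p q : ℝ) (n : ℕ) :
    pqPi p q (n + 1) = pqPi p q n * pqUp p q n / pqDown p q (n + 1) := rfl

lemma digit_three_mul (x : ℕ) (hx : 1 ≤ x) :
    (3 * x) / 3 ^ padicValNat 3 (3 * x) = x / 3 ^ padicValNat 3 x := by
  have hx0 : x ≠ 0 := by omega
  have hval : padicValNat 3 (3 * x) = 1 + padicValNat 3 x := by
    rw [padicValNat.mul (by norm_num) hx0, padicValNat.self (by norm_num)]
  rw [hval, Nat.add_comm, pow_succ']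
  exact Nat.mul_div_mul_left _ _ (by norm_num)

lemma val_3x1 (x : ℕ) : padicValNat 3 (3 * x + 1) = 0 :=
  padicValNat.eq_zero_of_not_dvd (by omega)

lemma val_3x2 (x : ℕ) : padicValNat 3 (3 * x + 2) = 0 :=
  padicValNat.eq_zero_of_not_dvd (by omega)

theorem pqPi_self_similar (p q : ℝ) (hp : 0 < p) (hp1 : p < 1) (hq : q = 1 - p) :
    ∀ x : ℕ, 1 ≤ x → pqPi p q (3 * x) = pqPi p q x := by
  have hp0 : p ≠ 0 := ne_of_gt hp
  have hq0 : q ≠ 0 := by rw [hq]; intro h; nlinarith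
  intro x hx1
  induction x, hx1 using Nat.le_induction with
  | base =>
    have h1 : padicValNat 3 1 = 0 := padicValNat.one
    have h2 : padicValNat 3 2 = padicValNat 3 (3 * 0 + 2) := by norm_num
    have h3 : padicValNat 3 3 = 1 := padicValNat.self (by norm_num)
    show pqPi p q 3 = pqPi p q 1
    simp only [show (3 : ℕ) = 2 + 1 from rfl, show (2 : ℕ) = 1 + 1 from rfl,
      pqPi_succ]
    simp only [show (1 : ℕ) + 1 + 1 = 3 from rfl, show (1 : ℕ) + 1 = 2 from rfl]
    rw [pqUp_eq p q 1 (by norm_num), pqUp_eq p q 2 (by norm_num),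
      pqDown_eq p q 2 (by norm_num), pqDown_eq p q 3 (by norm_num),
      h1, h2, val_3x2 0, h3]
    norm_num
    rw [mul_div_cancel_right₀ _ hp0, mul_div_cancel_right₀ _ hq0]
  | succ x hx ih =>
    -- values along the block
    have hup3x : pqUp p q (3 * x) = pqUp p q x := by
      rw [pqUp_eq p q (3 * x) (by omega), pqUp_eq p q x hx, digit_three_mul x hx]
    have hdn1 : pqDown p q (3 * x + 1) = q := by
      rw [pqDown_eq p q (3 * x + 1) (by omega), val_3x1]
      simp [Nat.add_mul_mod_self_left, Nat.mul_add_mod]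
    have hup1 : pqUp p q (3 * x + 1) = p := by
      rw [pqUp_eq p q (3 * x + 1) (by omega), val_3x1]
      simp [Nat.mul_add_mod]
    have hdn2 : pqDown p q (3 * x + 2) = p := by
      rw [pqDown_eq p q (3 * x + 2) (by omega), val_3x2]
      simp [Nat.mul_add_mod]
    have hup2 : pqUp p q (3 * x + 2) = q := by
      rw [pqUp_eq p q (3 * x + 2) (by omega), val_3x2]
      simp [Nat.mul_add_mod]
    have hdn3 : pqDown p q (3 * x + 3) = pqDown p q (x + 1) := by
      have h33 : 3 * x + 3 = 3 * (x + 1) := by ring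
      rw [h33, pqDown_eq p q (3 * (x + 1)) (by omega), pqDown_eq p q (x + 1) (by omega),
        digit_three_mul (x + 1) (by omega)]
    have hstep : 3 * (x + 1) = (3 * x + 2) + 1 := by ring
    rw [hstep, pqPi_succ, show 3 * x + 2 = (3 * x + 1) + 1 from rfl, pqPi_succ,
      show 3 * x + 1 + 1 = 3 * x + 2 from rfl,
      show (3 * x + 1 : ℕ) = (3 * x) + 1 from rfl, pqPi_succ, ih,
      hup3x, hdn1, hup1, hdn2, hup2, show (3 * x) + 1 + 1 + 1 = 3 * x + 3 from rfl, hdn3,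
      pqPi_succ]
    have key : ∀ A d : ℝ, A / q * p / p * q / d = A / d := by
      intro A d
      have h1 : A / q * p / p = A / q := by
        field_simp
      rw [h1, div_mul_cancel₀ _ hq0]
    exact key _ _
end

section
/- For p ∈ (0,1), q = 1-p, p ≠ 1/2, and R(z) = z(z²-3z+(2+pq))/(pq): if z ∈ ℝ with z < 0 or z > 2, then the iterates R^{∘n}(z) tend to +∞ or -∞; in particular the filled Julia set of R restricted to ℝ is contained in [0,2]. -/
theorem iterates_escape_outside_Icc (p q : ℝ) (hp : 0 < p) (hp1 : p < 1)
    (hphalf : p ≠ 1 / 2) (hq : q = 1 - p)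
    (R : ℝ → ℝ) (hR : ∀ z, R z = z * (z ^ 2 - 3 * z + (2 + p * q)) / (p * q)) :
    ∀ z : ℝ, z < 0 ∨ 2 < z →
      Filter.Tendsto (fun n : ℕ => |R^[n] z|) Filter.atTop Filter.atTop := by
  have hc : 0 < p * q := by rw [hq]; nlinarith
  have hc4 : p * q ≤ 1 / 4 := by rw [hq]; nlinarith [sq_nonneg (p - 1/2)]
  intro z hz
  rcases hz with hz | hz
  · -- negative case
    have key : ∀ n : ℕ, R^[n] z < 0 ∧ 9 ^ n * (-z) ≤ -(R^[n] z) := by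
      intro n
      induction n with
      | zero => exact ⟨hz, by simp⟩
      | succ n ih =>
        obtain ⟨h1, h2⟩ := ih
        set w := R^[n] z with hw
        have hstep : R w ≤ 9 * w := by
          rw [hR w, div_le_iff₀ hc]
          have hA : (0:ℝ) ≤ (w - 1) * (w - 2) - 8 * (p * q) := by nlinarith
          nlinarith [mul_nonneg (neg_nonneg.mpr h1.le) hA]
        have hit : R^[n+1] z = R w := by rw [Function.iterate_succ_apply']
        constructor
        · rw [hit]; nlinarith
        · rw [hit]; calc 9 ^ (n+1) * (-z) = 9 * (9 ^ n * (-z)) := by ring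
            _ ≤ 9 * (-w) := by linarith
            _ ≤ -(R w) := by linarith
    have hten : Filter.Tendsto (fun n : ℕ => (9:ℝ) ^ n * (-z)) Filter.atTop Filter.atTop :=
      (tendsto_pow_atTop_atTop_of_one_lt (by norm_num : (1:ℝ) < 9)).atTop_mul_const
        (by linarith : 0 < -z)
    exact Filter.tendsto_atTop_mono (fun n => (key n).2.trans (neg_le_abs _)) hten
  · -- positive case
    have key : ∀ n : ℕ, 2 < R^[n] z ∧ 9 ^ n * (z - 2) ≤ R^[n] z - 2 := by
      intro n
      induction n with
      | zero => exact ⟨hz, by simp⟩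
      | succ n ih =>
        obtain ⟨h1, h2⟩ := ih
        set w := R^[n] z with hw
        have hstep : 9 * w - 16 ≤ R w := by
          rw [hR w, le_div_iff₀ hc]
          have hA : (0:ℝ) ≤ w * (w - 1) - 8 * (p * q) := by nlinarith
          nlinarith [mul_nonneg (by linarith : (0:ℝ) ≤ w - 2) hA]
        have hit : R^[n+1] z = R w := by rw [Function.iterate_succ_apply']
        constructor
        · rw [hit]; nlinarith
        · rw [hit]; calc 9 ^ (n+1) * (z - 2) = 9 * (9 ^ n * (z - 2)) := by ring
            _ ≤ 9 * (w - 2) := by linarith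
            _ ≤ R w - 2 := by linarith
    have hten : Filter.Tendsto (fun n : ℕ => (9:ℝ) ^ n * (z - 2)) Filter.atTop Filter.atTop :=
      (tendsto_pow_atTop_atTop_of_one_lt (by norm_num : (1:ℝ) < 9)).atTop_mul_const
        (by linarith : 0 < z - 2)
    refine Filter.tendsto_atTop_mono (fun n => ?_) hten
    have := (key n).1
    have := (key n).2
    calc 9 ^ n * (z - 2) ≤ R^[n] z - 2 := this
      _ ≤ R^[n] z := by linarith
      _ ≤ |R^[n] z| := le_abs_self _
end
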